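/- Let R = o[x] where o is a discrete valuation ring with uniformizer ϖ, let R' = o[x,z]/(xz−ϖ) and R'' = o[x,t]/(x−ϖt). For any f ∈ o[x] not in the ideal (x,ϖ), the map R'_f ⊕ R''_f → R'_f[1/z] = R''_f[1/t] sending (f₁,f₂) to f₁ − f₂ is surjective, where R'_f, R''_f denote localizations at f and the gluing identifies z = t⁻¹. -/

import Mathlib

open MvPolynomial


theorem blowup_aux
    {o R' R'' Rf' Rf'' T : Type*} [CommRing o] [CommRing R'] [CommRing R'']
    [CommRing Rf'] [CommRing Rf''] [CommRing T]
    [Algebra R' Rf'] [Algebra R'' Rf''] [Algebra Rf' T]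
    (q' : MvPolynomial (Fin 2) o →+* R') (q'' : MvPolynomial (Fin 2) o →+* R'')
    (hq' : Function.Surjective q')
    (Fe : MvPolynomial (Fin 2) o)
    [IsLocalization.Away (q' Fe) Rf'] [IsLocalization.Away (q'' Fe) Rf'']
    [IsLocalization.Away (algebraMap R' Rf' (q' (X 1))) T]
    (β : Rf'' →+* T)
    (hβx : β (algebraMap R'' Rf'' (q'' (X 0))) = algebraMap Rf' T (algebraMap R' Rf' (q' (X 0))))
    (hβo : ∀ c : o, β (algebraMap R'' Rf'' (q'' (C c))) =
      algebraMap Rf' T (algebraMap R' Rf' (q' (C c))))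
    (hβF : β (algebraMap R'' Rf'' (q'' Fe)) = algebraMap Rf' T (algebraMap R' Rf' (q' Fe)))
    (hβt : β (algebraMap R'' Rf'' (q'' (X 1))) * algebraMap Rf' T (algebraMap R' Rf' (q' (X 1))) = 1) :
    ∀ y : T, ∃ (f₁ : Rf') (f₂ : Rf''), algebraMap Rf' T f₁ - β f₂ = y := by
  intro y
  classical
  -- units
  have hzu : IsUnit (algebraMap Rf' T (algebraMap R' Rf' (q' (X 1)))) :=
    IsLocalization.Away.algebraMap_isUnit (S := T) (algebraMap R' Rf' (q' (X 1)))
  have hfu : IsUnit (algebraMap Rf' T (algebraMap R' Rf' (q' Fe))) :=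
    (IsLocalization.Away.algebraMap_isUnit (S := Rf') (q' Fe)).map (algebraMap Rf' T)
  -- write y = q' P / (z^n f^m)
  obtain ⟨n, a, hna⟩ := IsLocalization.Away.surj (S := T) (algebraMap R' Rf' (q' (X 1))) y
  obtain ⟨m, r, hmr⟩ := IsLocalization.Away.surj (S := Rf') (q' Fe) a
  obtain ⟨P, hP⟩ := hq' r
  have hy : y * (algebraMap Rf' T (algebraMap R' Rf' (q' (X 1))) ^ n *
      algebraMap Rf' T (algebraMap R' Rf' (q' Fe)) ^ m) =
      algebraMap Rf' T (algebraMap R' Rf' (q' P)) := by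
    have h2 := congrArg (algebraMap Rf' T) hmr
    rw [map_mul, map_pow] at h2
    rw [hP, ← h2, ← hna]
    ring
  -- the key computation
  have key : ∀ Q : MvPolynomial (Fin 2) o, ∃ (f₁ : Rf') (f₂ : Rf''),
      (algebraMap Rf' T f₁ - β f₂) * (algebraMap Rf' T (algebraMap R' Rf' (q' (X 1))) ^ n *
        algebraMap Rf' T (algebraMap R' Rf' (q' Fe)) ^ m) =
      algebraMap Rf' T (algebraMap R' Rf' (q' Q)) := by
    intro Q
    induction Q using MvPolynomial.induction_on' with
    | add p q hp hq =>
      obtain ⟨a₁, a₂, ha⟩ := hp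
      obtain ⟨b₁, b₂, hb⟩ := hq
      refine ⟨a₁ + b₁, a₂ + b₂, ?_⟩
      rw [map_add, map_add, map_add, map_add, map_add, ← ha, ← hb]
      ring
    | monomial u a =>
      set i := u 0 with hi
      set j := u 1 with hj
      have hmono : (monomial u a : MvPolynomial (Fin 2) o) = C a * X 0 ^ i * X 1 ^ j := by
        rw [monomial_eq, Finsupp.prod_fintype _ _ (fun i => pow_zero _), Fin.prod_univ_two,
          ← hi, ← hj]
        ring
      by_cases h : n ≤ j
      · -- enough powers of z : comes from Rf'
        obtain ⟨k, hk⟩ := Nat.exists_eq_add_of_le h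
        refine ⟨algebraMap R' Rf' (q' (C a * X 0 ^ i * X 1 ^ k)) *
          (IsLocalization.Away.invSelf (S := Rf') (q' Fe)) ^ m, 0, ?_⟩
        have h1 : algebraMap Rf' T (IsLocalization.Away.invSelf (S := Rf') (q' Fe)) *
            algebraMap Rf' T (algebraMap R' Rf' (q' Fe)) = 1 := by
          rw [← map_mul, mul_comm, IsLocalization.Away.mul_invSelf, map_one]
        have h1m : algebraMap Rf' T (IsLocalization.Away.invSelf (S := Rf') (q' Fe)) ^ m *
            algebraMap Rf' T (algebraMap R' Rf' (q' Fe)) ^ m = 1 := by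
          rw [← mul_pow, h1, one_pow]
        have hsplit : (monomial u a : MvPolynomial (Fin 2) o) =
            (C a * X 0 ^ i * X 1 ^ k) * X 1 ^ n := by
          rw [hmono, hk, pow_add]; ring
        rw [hsplit]
        simp only [map_zero, sub_zero, map_mul, map_pow]
        linear_combination (algebraMap Rf' T (algebraMap R' Rf' (q' (C a))) *
          algebraMap Rf' T (algebraMap R' Rf' (q' (X 0))) ^ i *
          algebraMap Rf' T (algebraMap R' Rf' (q' (X 1))) ^ k *
          algebraMap Rf' T (algebraMap R' Rf' (q' (X 1))) ^ n) * h1m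
      · -- not enough powers of z : comes from Rf'' via β
        push_neg at h
        obtain ⟨k, hk⟩ := Nat.exists_eq_add_of_le h.le
        refine ⟨0, -(algebraMap R'' Rf'' (q'' (C a * X 0 ^ i * X 1 ^ k)) *
          (IsLocalization.Away.invSelf (S := Rf'') (q'' Fe)) ^ m), ?_⟩
        have hAx : β (algebraMap R'' Rf'' (q'' (C a))) *
              β (algebraMap R'' Rf'' (q'' (X 0))) ^ i =
            algebraMap Rf' T (algebraMap R' Rf' (q' (C a))) *
              algebraMap Rf' T (algebraMap R' Rf' (q' (X 0))) ^ i := by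
          rw [hβo, hβx]
        have hBm : β (IsLocalization.Away.invSelf (S := Rf'') (q'' Fe)) ^ m *
            algebraMap Rf' T (algebraMap R' Rf' (q' Fe)) ^ m = 1 := by
          rw [← mul_pow, ← hβF, ← map_mul, mul_comm (IsLocalization.Away.invSelf (q'' Fe)),
            IsLocalization.Away.mul_invSelf, map_one, one_pow]
        have hCk : β (algebraMap R'' Rf'' (q'' (X 1))) ^ k *
            algebraMap Rf' T (algebraMap R' Rf' (q' (X 1))) ^ k = 1 := by
          rw [← mul_pow, hβt, one_pow]
        rw [hmono, hk, pow_add]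
        simp only [map_zero, zero_sub, map_neg, neg_neg, map_mul, map_pow]
        linear_combination
          (β (algebraMap R'' Rf'' (q'' (C a))) * β (algebraMap R'' Rf'' (q'' (X 0))) ^ i *
            β (IsLocalization.Away.invSelf (S := Rf'') (q'' Fe)) ^ m *
            algebraMap Rf' T (algebraMap R' Rf' (q' (X 1))) ^ j *
            algebraMap Rf' T (algebraMap R' Rf' (q' Fe)) ^ m) * hCk +
          (β (algebraMap R'' Rf'' (q'' (C a))) * β (algebraMap R'' Rf'' (q'' (X 0))) ^ i *
            algebraMap Rf' T (algebraMap R' Rf' (q' (X 1))) ^ j) * hBm +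
          (algebraMap Rf' T (algebraMap R' Rf' (q' (X 1))) ^ j) * hAx
  obtain ⟨f₁, f₂, hkey⟩ := key P
  refine ⟨f₁, f₂, ?_⟩
  have hu : IsUnit (algebraMap Rf' T (algebraMap R' Rf' (q' (X 1))) ^ n *
      algebraMap Rf' T (algebraMap R' Rf' (q' Fe)) ^ m) := (hzu.pow n).mul (hfu.pow m)
  exact hu.mul_right_cancel (hkey.trans hy.symm)


/-- Let `R = o[x]` with `o` a discrete valuation ring with uniformizer `ϖ`,
`R' = o[x,z]/(xz - ϖ)` and `R'' = o[x,t]/(x - ϖt)`.  For any `f ∈ o[x]` not in the ideal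
`(x, ϖ)`, the map `R'_f ⊕ R''_f → R'_f[1/z] = R''_f[1/t]`, `(f₁, f₂) ↦ f₁ - f₂`, is surjective.
Here `R'_f`, `R''_f` are the localizations at `f` and the gluing identifies `z = t⁻¹`.

We present `R'`, `R''` as quotients of `o[X₀, X₁]` (`X₀ = x`, `X₁ = z` resp. `t`), the
localizations via `IsLocalization.Away`, and the common localization `T = R'_f[1/z]` together
with the gluing map `β : R''_f → T` characterized by `β(x) = x`, `β(c) = c` for `c ∈ o`, and
`β(t)·z = 1`. -/
theorem blowup_cech_H1_vanishing
    (o : Type*) [CommRing o] [IsDomain o] [IsDiscreteValuationRing o]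
    (ϖ : o) (hϖ : Irreducible ϖ)
    (f : Polynomial o)
    (hf : f ∉ Ideal.span ({Polynomial.X, Polynomial.C ϖ} : Set (Polynomial o)))
    -- `R' = o[x,z]/(xz - ϖ)` and `R'' = o[x,t]/(x - ϖt)`
    (R' R'' : Type*) [CommRing R'] [CommRing R'']
    (q' : MvPolynomial (Fin 2) o →+* R') (q'' : MvPolynomial (Fin 2) o →+* R'')
    (hq' : Function.Surjective q')
    (hker' : RingHom.ker q' = Ideal.span {(X 0 * X 1 - C ϖ : MvPolynomial (Fin 2) o)})
    (hq'' : Function.Surjective q'')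
    (hker'' : RingHom.ker q'' = Ideal.span {(X 0 - C ϖ * X 1 : MvPolynomial (Fin 2) o)})
    -- the localizations `R'_f` and `R''_f` at (the images of) `f`
    (Rf' Rf'' : Type*) [CommRing Rf'] [CommRing Rf'']
    [Algebra R' Rf'] [Algebra R'' Rf'']
    [IsLocalization.Away (q' (Polynomial.eval₂ (C : o →+* MvPolynomial (Fin 2) o) (X 0) f)) Rf']
    [IsLocalization.Away (q'' (Polynomial.eval₂ (C : o →+* MvPolynomial (Fin 2) o) (X 0) f)) Rf'']
    -- `T = R'_f[1/z]`
    (T : Type*) [CommRing T] [Algebra Rf' T]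
    [IsLocalization.Away (algebraMap R' Rf' (q' (X 1))) T]
    -- the gluing map `R''_f → T`, identifying `t = z⁻¹`
    (β : Rf'' →+* T)
    (hβx : β (algebraMap R'' Rf'' (q'' (X 0))) = algebraMap Rf' T (algebraMap R' Rf' (q' (X 0))))
    (hβo : ∀ c : o, β (algebraMap R'' Rf'' (q'' (C c))) =
      algebraMap Rf' T (algebraMap R' Rf' (q' (C c))))
    (hβt : β (algebraMap R'' Rf'' (q'' (X 1))) * algebraMap Rf' T (algebraMap R' Rf' (q' (X 1))) = 1) :
    ∀ y : T, ∃ (f₁ : Rf') (f₂ : Rf''), algebraMap Rf' T f₁ - β f₂ = y := by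
  have hβF : β (algebraMap R'' Rf''
        (q'' (Polynomial.eval₂ (C : o →+* MvPolynomial (Fin 2) o) (X 0) f))) =
      algebraMap Rf' T (algebraMap R' Rf'
        (q' (Polynomial.eval₂ (C : o →+* MvPolynomial (Fin 2) o) (X 0) f))) := by
    have hrh : ((β.comp (algebraMap R'' Rf'')).comp q'').comp
          (Polynomial.eval₂RingHom (C : o →+* MvPolynomial (Fin 2) o) (X 0)) =
        (((algebraMap Rf' T).comp (algebraMap R' Rf')).comp q').comp
          (Polynomial.eval₂RingHom (C : o →+* MvPolynomial (Fin 2) o) (X 0)) := by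
      apply Polynomial.ringHom_ext
      · intro c
        simpa using hβo c
      · simpa using hβx
    simpa using RingHom.congr_fun hrh f
  exact blowup_aux q' q'' hq'
    (Polynomial.eval₂ (C : o →+* MvPolynomial (Fin 2) o) (X 0) f) β hβx hβo hβF hβt
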